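/- Let t be a positive integer and let ξ₁,…,ξ_t be (the traces of) t independent random walks on a graph G, each started at x and stopped upon exiting a finite set B ⊆ G, which together generate the stopped IDLA aggregate A_t(x ↦ B). Let Q ⊆ B, let J be uniform on {1,…,t} independent of the walks, and let Γ = {j : ξ_j hits Q before exiting B}. Then conditionally on the event {B ⊆ A_t(x ↦ B)}, the probability that J ∈ Γ is at least |Q|/t. Consequently, for a single random walk ξ started at x and stopped upon exiting B, P[ξ ∩ Q ≠ ∅] ≥ P[B ⊆ A_t(x ↦ B)] · |Q|/t. -/
import Mathlib


open MeasureTheory ENNReal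

/-- Hitting-probability lemma (Lemma 1 of the paper). The `t` walks
`ξ j : Ω → Set V` (traces, stopped upon exiting `B`) generate the stopped
IDLA aggregate `Agg : Ω → Finset V`; the generation property is encoded by
an injection assigning to each vertex of the aggregate outside the initial
seed a distinct walk whose trace visits it.  Then, given `Q ⊆ B`:
(i) on the event `{B ⊆ Agg}`, at least `|Q|` of the walks hit `Q`, so the
probability that a uniformly chosen walk hits `Q`, restricted to that event,
is at least `(|Q|/t) P[B ⊆ Agg]`; and (ii) consequently, a single walk
(distributed as each `ξ j`) hits `Q` with probability at least
`P[B ⊆ Agg] ⬝ |Q| / t`. -/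
theorem stmt_0 {Ω V : Type*} [MeasurableSpace Ω] [DecidableEq V] [Fintype V]
    (P : Measure Ω) [IsProbabilityMeasure P]
    (t : ℕ) (ht : 0 < t) (ξ : Fin t → Ω → Set V)
    (Q B : Finset V) (hQB : Q ⊆ B)
    (Agg : Ω → Finset V)
    -- generation: each aggregate vertex was reached by a distinct walk,
    -- whose (stopped) trace therefore contains it
    (hgen : ∀ ω : Ω, ∃ f : V → Fin t,
      Set.InjOn f (Agg ω) ∧ ∀ v ∈ Agg ω, v ∈ ξ (f v) ω)
    -- the walks are identically distributed, as far as hitting `Q` goes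
    (hiid : ∀ j : Fin t,
      P {ω | ∃ q ∈ Q, q ∈ ξ j ω} = P {ω | ∃ q ∈ Q, q ∈ ξ ⟨0, ht⟩ ω})
    (hmeas : ∀ j : Fin t, MeasurableSet {ω | ∃ q ∈ Q, q ∈ ξ j ω})
    (hmeasE : MeasurableSet {ω | ↑B ⊆ (Agg ω : Set V)}) :
    -- (i) the uniform-index statement: summing over the `t` equally likely
    -- values of the independent uniform index `J`, restricted to the event
    -- `{B ⊆ Agg}`, the chance that walk `J` hits `Q` is at least `|Q|/t`
    (Q.card : ℝ≥0∞) * P {ω | ↑B ⊆ (Agg ω : Set V)} ≤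
      ∑ j : Fin t, P ({ω | ∃ q ∈ Q, q ∈ ξ j ω} ∩ {ω | ↑B ⊆ (Agg ω : Set V)}) ∧
    -- (ii) consequence for a single walk
    P {ω | ↑B ⊆ (Agg ω : Set V)} * (Q.card : ℝ≥0∞) / (t : ℝ≥0∞) ≤
      P {ω | ∃ q ∈ Q, q ∈ ξ ⟨0, ht⟩ ω} := by
  classical
  set E : Set Ω := {ω | ↑B ⊆ (Agg ω : Set V)} with hEdef
  set A : Fin t → Set Ω := fun j => {ω | ∃ q ∈ Q, q ∈ ξ j ω} with hAdef
  have key : ∀ ω, (Q.card : ℝ≥0∞) * E.indicator 1 ω ≤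
      ∑ j : Fin t, (A j ∩ E).indicator (1 : Ω → ℝ≥0∞) ω := by
    intro ω
    by_cases hω : ω ∈ E
    · obtain ⟨f, hinj, hvis⟩ := hgen ω
      have hQA : ∀ v ∈ Q, v ∈ Agg ω := fun v hv => hω (by exact_mod_cast hQB hv)
      have hcard : (Q.image f).card = Q.card :=
        Finset.card_image_of_injOn (fun a ha b hb => hinj (hQA a ha) (hQA b hb))
      have hsub : ∀ j ∈ Q.image f, ω ∈ A j ∩ E := by
        intro j hj
        obtain ⟨q, hq, rfl⟩ := Finset.mem_image.mp hj
        exact ⟨⟨q, hq, hvis q (hQA q hq)⟩, hω⟩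
      calc (Q.card : ℝ≥0∞) * E.indicator 1 ω = (Q.card : ℝ≥0∞) := by
            simp [Set.indicator_of_mem hω]
        _ = ∑ j ∈ Q.image f, (1 : ℝ≥0∞) := by simp [hcard]
        _ = ∑ j ∈ Q.image f, (A j ∩ E).indicator (1 : Ω → ℝ≥0∞) ω :=
            Finset.sum_congr rfl (fun j hj => by
              simp [Set.indicator_of_mem (hsub j hj)])
        _ ≤ ∑ j : Fin t, (A j ∩ E).indicator (1 : Ω → ℝ≥0∞) ω :=
            Finset.sum_le_sum_of_subset (Finset.subset_univ _)
    · simp [Set.indicator_of_notMem hω]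
  have h1 : (Q.card : ℝ≥0∞) * P E ≤ ∑ j : Fin t, P (A j ∩ E) := by
    have hL : (Q.card : ℝ≥0∞) * P E
        = ∫⁻ ω, (Q.card : ℝ≥0∞) * E.indicator 1 ω ∂P := by
      rw [lintegral_const_mul _ (measurable_one.indicator hmeasE)]
      rw [lintegral_indicator_one hmeasE]
    have hR : ∑ j : Fin t, P (A j ∩ E)
        = ∫⁻ ω, ∑ j : Fin t, (A j ∩ E).indicator (1 : Ω → ℝ≥0∞) ω ∂P := by
      rw [lintegral_finset_sum]
      · exact Finset.sum_congr rfl fun j _ => by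
          rw [lintegral_indicator_one ((hmeas j).inter hmeasE)]
      · exact fun j _ => measurable_one.indicator ((hmeas j).inter hmeasE)
    rw [hL, hR]
    exact lintegral_mono key
  refine ⟨h1, ?_⟩
  have h2 : ∑ j : Fin t, P (A j ∩ E) ≤ (t : ℝ≥0∞) * P (A ⟨0, ht⟩) := by
    calc ∑ j : Fin t, P (A j ∩ E) ≤ ∑ j : Fin t, P (A j) :=
          Finset.sum_le_sum fun j _ => measure_mono Set.inter_subset_left
      _ = ∑ _j : Fin t, P (A ⟨0, ht⟩) := Finset.sum_congr rfl fun j _ => hiid j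
      _ = (t : ℝ≥0∞) * P (A ⟨0, ht⟩) := by simp [mul_comm]
  refine ENNReal.div_le_of_le_mul ?_
  calc P E * (Q.card : ℝ≥0∞) = (Q.card : ℝ≥0∞) * P E := mul_comm _ _
    _ ≤ (t : ℝ≥0∞) * P (A ⟨0, ht⟩) := h1.trans h2
    _ = P (A ⟨0, ht⟩) * (t : ℝ≥0∞) := mul_comm _ _
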